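/- Let m and e be integers with e ≥ 0. Then Σ_{n=0}^{∞} (u^{e+2})^n / (q;q)_n · I_Δ(m-n, e) converges absolutely and equals u^{-m·e} · (q^{1-m};q)_∞ / (q;q)_∞, where (q^{1-m};q)_∞ = ∏_{i=0}^{∞}(1 - q^{1-m+i}). In particular the sum vanishes when m > 0. -/

import Mathlib

open scoped BigOperators

/-- Finite q-Pochhammer symbol `(a;q)_n = ∏_{i=0}^{n-1} (1 - a q^i)`. -/
noncomputable def qPoch (a q : ℂ) (n : ℕ) : ℂ :=
  ∏ i ∈ Finset.range n, (1 - a * q ^ i)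

/-- Infinite q-Pochhammer symbol `(a;q)_∞ = ∏_{i=0}^{∞} (1 - a q^i)`. -/
noncomputable def qPochInf (a q : ℂ) : ℂ :=
  ∏' i : ℕ, (1 - a * q ^ i)

/-- The `n`-th term of the series defining the tetrahedral index `I_Δ(m,e)`,
with `q = u^2` and vanishing below `e₊ = max(-e,0)`. -/
noncomputable def tetTerm (u : ℂ) (m e : ℤ) (n : ℕ) : ℂ :=
  if (-e).toNat ≤ n then
    (-1 : ℂ) ^ n * u ^ ((n : ℤ) * ((n : ℤ) + 1) - (2 * (n : ℤ) + e) * m) /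
      (qPoch (u ^ 2) (u ^ 2) n * qPoch (u ^ 2) (u ^ 2) ((n : ℤ) + e).toNat)
  else 0

/-- The tetrahedral index `I_Δ(m,e) = Σ_{n=e₊}^∞ (-1)^n u^{n(n+1)-(2n+e)m}/((q;q)_n (q;q)_{n+e})`. -/
noncomputable def tetIndex (u : ℂ) (m e : ℤ) : ℂ := ∑' n : ℕ, tetTerm u m e n

section Aux

/-- Weierstrass product inequality. -/
lemma weier (a : ℕ → ℝ) (h0 : ∀ i, 0 ≤ a i) (h1 : ∀ i, a i ≤ 1) (n : ℕ) :
    1 - ∑ i ∈ Finset.range n, a i ≤ ∏ i ∈ Finset.range n, (1 - a i) := by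
  induction n with
  | zero => simp
  | succ n ih =>
    rw [Finset.sum_range_succ, Finset.prod_range_succ]
    have hp : 0 ≤ ∏ i ∈ Finset.range n, (1 - a i) :=
      Finset.prod_nonneg fun i _ => by linarith [h1 i]
    have hS : 0 ≤ ∑ i ∈ Finset.range n, a i := Finset.sum_nonneg fun i _ => h0 i
    nlinarith [h0 n, h1 n, ih]

variable {q : ℂ}

lemma factor_ne_zero {w : ℂ} (hw : ‖w‖ < 1) : (1 : ℂ) - w ≠ 0 := by
  intro h
  have : (1 : ℂ) = w := by linear_combination h
  rw [← this] at hw; simp at hw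

lemma qq_norm_lt (hq : ‖q‖ < 1) (i : ℕ) : ‖q * q ^ i‖ < 1 := by
  rw [norm_mul, norm_pow]
  calc ‖q‖ * ‖q‖ ^ i ≤ ‖q‖ * 1 :=
        mul_le_mul_of_nonneg_left (pow_le_one₀ (norm_nonneg q) hq.le) (norm_nonneg q)
    _ < 1 := by simpa using hq

lemma qPoch_ne_zero (hq : ‖q‖ < 1) (n : ℕ) : qPoch q q n ≠ 0 := by
  rw [qPoch]
  exact Finset.prod_ne_zero_iff.2 fun i _ => factor_ne_zero (qq_norm_lt hq i)

/-- Uniform positive lower bound on `‖(q;q)_n‖`. -/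
lemma exists_lb (hq : ‖q‖ < 1) : ∃ C : ℝ, 0 < C ∧ C ≤ 1 ∧ ∀ n, C ≤ ‖qPoch q q n‖ := by
  have hx0 : 0 ≤ ‖q‖ := norm_nonneg q
  have h1x : 0 < 1 - ‖q‖ := by linarith
  obtain ⟨K, hK⟩ : ∃ K : ℕ, ‖q‖ ^ K < (1 - ‖q‖) / 2 :=
    exists_pow_lt_of_lt_one (by linarith) hq
  have hfac : ∀ i : ℕ, 0 < 1 - ‖q‖ ^ (i + 1) := by
    intro i
    have h2 : ‖q‖ ^ (i + 1) ≤ ‖q‖ ^ 1 := pow_le_pow_of_le_one hx0 hq.le (by omega)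
    have : ‖q‖ ^ (i+1) < 1 := lt_of_le_of_lt (by simpa using h2) hq
    linarith
  have hfac1 : ∀ i : ℕ, 1 - ‖q‖ ^ (i + 1) ≤ 1 := fun i => by
    have := pow_nonneg hx0 (i + 1); linarith
  have hPpos : ∀ n, 0 < ∏ i ∈ Finset.range n, (1 - ‖q‖ ^ (i + 1)) := fun n =>
    Finset.prod_pos fun i _ => hfac i
  have hPle1 : ∀ n, ∏ i ∈ Finset.range n, (1 - ‖q‖ ^ (i + 1)) ≤ 1 := fun n =>
    Finset.prod_le_one (fun i _ => (hfac i).le) fun i _ => hfac1 i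
  refine ⟨(∏ i ∈ Finset.range K, (1 - ‖q‖ ^ (i + 1))) / 2, by linarith [hPpos K],
    by linarith [hPle1 K, hPpos K], fun n => ?_⟩
  have key : (∏ i ∈ Finset.range K, (1 - ‖q‖ ^ (i + 1))) / 2
      ≤ ∏ i ∈ Finset.range n, (1 - ‖q‖ ^ (i + 1)) := by
    rcases le_or_gt n K with h | h
    · have hsplit : (∏ i ∈ Finset.range K, (1 - ‖q‖ ^ (i + 1)))
          = (∏ i ∈ Finset.range n, (1 - ‖q‖ ^ (i + 1)))
            * ∏ i ∈ Finset.Ico n K, (1 - ‖q‖ ^ (i + 1)) :=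
        (Finset.prod_range_mul_prod_Ico _ h).symm
      have h2 : ∏ i ∈ Finset.Ico n K, (1 - ‖q‖ ^ (i + 1)) ≤ 1 :=
        Finset.prod_le_one (fun i _ => (hfac i).le) fun i _ => hfac1 i
      have h3 : 0 ≤ ∏ i ∈ Finset.Ico n K, (1 - ‖q‖ ^ (i + 1)) :=
        Finset.prod_nonneg fun i _ => (hfac i).le
      nlinarith [hPpos n, hPpos K]
    · have hsplit : (∏ i ∈ Finset.range n, (1 - ‖q‖ ^ (i + 1)))
          = (∏ i ∈ Finset.range K, (1 - ‖q‖ ^ (i + 1)))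
            * ∏ i ∈ Finset.Ico K n, (1 - ‖q‖ ^ (i + 1)) :=
        (Finset.prod_range_mul_prod_Ico _ h.le).symm
      have hre : ∏ i ∈ Finset.Ico K n, (1 - ‖q‖ ^ (i + 1))
          = ∏ j ∈ Finset.range (n - K), (1 - ‖q‖ ^ (K + j + 1)) := by
        rw [Finset.prod_Ico_eq_prod_range]
      have hsum : ∑ j ∈ Finset.range (n - K), ‖q‖ ^ (K + j + 1) ≤ 1 / 2 := by
        have hsummable : Summable (fun j : ℕ => ‖q‖ ^ (K + 1) * ‖q‖ ^ j) :=
          (summable_geometric_of_lt_one hx0 hq).mul_left _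
        have h1 : ∑ j ∈ Finset.range (n - K), ‖q‖ ^ (K + j + 1)
            = ∑ j ∈ Finset.range (n - K), ‖q‖ ^ (K + 1) * ‖q‖ ^ j := by
          refine Finset.sum_congr rfl fun j _ => ?_
          rw [← pow_add]; ring_nf
        have h2 : ∑ j ∈ Finset.range (n - K), ‖q‖ ^ (K + 1) * ‖q‖ ^ j
            ≤ ∑' j : ℕ, ‖q‖ ^ (K + 1) * ‖q‖ ^ j :=
          Summable.sum_le_tsum _ (fun j _ => by positivity) hsummable
        have h3 : ∑' j : ℕ, ‖q‖ ^ (K + 1) * ‖q‖ ^ j = ‖q‖ ^ (K + 1) * (1 - ‖q‖)⁻¹ := by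
          rw [tsum_mul_left, tsum_geometric_of_lt_one hx0 hq]
        have h4 : ‖q‖ ^ (K + 1) ≤ ‖q‖ ^ K := pow_le_pow_of_le_one hx0 hq.le (by omega)
        have h5 : ‖q‖ ^ (K + 1) * (1 - ‖q‖)⁻¹ ≤ 1 / 2 := by
          rw [mul_inv_le_iff₀ h1x]
          nlinarith
        linarith
      have hW : 1 - ∑ j ∈ Finset.range (n - K), ‖q‖ ^ (K + j + 1)
          ≤ ∏ j ∈ Finset.range (n - K), (1 - ‖q‖ ^ (K + j + 1)) :=
        weier (fun j => ‖q‖ ^ (K + j + 1)) (fun j => by positivity)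
          (fun j => pow_le_one₀ hx0 hq.le) _
      have h6 : (1:ℝ)/2 ≤ ∏ j ∈ Finset.range (n - K), (1 - ‖q‖ ^ (K + j + 1)) := by
        linarith
      rw [hsplit, hre]
      nlinarith [hPpos K]
  refine le_trans key ?_
  rw [qPoch, norm_prod]
  refine Finset.prod_le_prod (fun i _ => (hfac i).le) fun i _ => ?_
  have := norm_sub_norm_le (1 : ℂ) (q * q ^ i)
  simp only [norm_one, norm_mul, norm_pow] at this
  calc 1 - ‖q‖ ^ (i + 1) = 1 - ‖q‖ * ‖q‖ ^ i := by ring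
    _ ≤ ‖1 - q * q ^ i‖ := this

end Aux

open Filter Topology

lemma log_summable {q : ℂ} (hq : ‖q‖ < 1) (w : ℂ) :
    Summable fun i : ℕ => Complex.log (1 - w * q ^ i) := by
  have h0 : Tendsto (fun i : ℕ => ‖w‖ * ‖q‖ ^ i) atTop (𝓝 0) := by
    simpa using (tendsto_pow_atTop_nhds_zero_of_lt_one (norm_nonneg q) hq).const_mul ‖w‖
  obtain ⟨K, hK⟩ := (h0.eventually_lt_const (show (0:ℝ) < 1/2 by norm_num)).exists_forall_of_atTop
  rw [← summable_nat_add_iff K]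
  have hbound : ∀ i : ℕ, ‖Complex.log (1 - w * q ^ (i + K))‖
      ≤ (3 / 2 * (‖w‖ * ‖q‖ ^ K)) * ‖q‖ ^ i := by
    intro i
    have h1 : ‖-(w * q ^ (i + K))‖ ≤ 1/2 := by
      rw [norm_neg, norm_mul, norm_pow]
      calc ‖w‖ * ‖q‖ ^ (i + K) ≤ ‖w‖ * ‖q‖ ^ K := by
            refine mul_le_mul_of_nonneg_left ?_ (norm_nonneg w)
            exact pow_le_pow_of_le_one (norm_nonneg q) hq.le (by omega)
        _ ≤ 1/2 := (hK K le_rfl).le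
    have h2 := Complex.norm_log_one_add_half_le_self h1
    rw [← sub_eq_add_neg] at h2
    refine h2.trans ?_
    rw [norm_neg, norm_mul, norm_pow, pow_add]
    ring_nf
    exact le_of_eq (by ring)
  exact Summable.of_norm_bounded
    (((summable_geometric_of_lt_one (norm_nonneg q) hq).mul_left _)) hbound

lemma multipliable_one_sub {q : ℂ} (hq : ‖q‖ < 1) (w : ℂ) :
    Multipliable (fun i : ℕ => 1 - w * q ^ i) := by
  by_cases hz : ∀ i : ℕ, 1 - w * q ^ i ≠ 0
  · exact Complex.multipliable_of_summable_log (log_summable hq w)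
  · push_neg at hz
    obtain ⟨i0, h0⟩ := hz
    refine ⟨0, ?_⟩
    rw [HasProd]
    refine Tendsto.congr' ?_ tendsto_const_nhds
    filter_upwards [Filter.eventually_ge_atTop ({i0} : Finset ℕ)] with s hs
    exact (Finset.prod_eq_zero (hs (Finset.mem_singleton_self i0)) h0).symm

lemma qPochInf_ne_zero {q : ℂ} (hq : ‖q‖ < 1) (w : ℂ) (hz : ∀ i : ℕ, 1 - w * q ^ i ≠ 0) :
    qPochInf w q ≠ 0 := by
  have := Complex.cexp_tsum_eq_tprod (f := fun i : ℕ => 1 - w * q ^ i) hz (log_summable hq w)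
  rw [qPochInf, ← this]
  exact Complex.exp_ne_zero _

lemma tendsto_qPoch {q : ℂ} (hq : ‖q‖ < 1) (w : ℂ) :
    Tendsto (fun n => qPoch w q n) atTop (𝓝 (qPochInf w q)) :=
  HasProd.tendsto_prod_nat (multipliable_one_sub hq w).hasProd

lemma qPochInf_split {q : ℂ} (hq : ‖q‖ < 1) (w : ℂ) (k : ℕ) :
    qPoch w q k * qPochInf (w * q ^ k) q = qPochInf w q := by
  have hm : Multipliable (fun n : ℕ => 1 - w * q ^ (n + k)) := by
    refine (multipliable_one_sub hq (w * q ^ k)).congr fun i => ?_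
    rw [pow_add]; ring
  calc qPoch w q k * qPochInf (w * q ^ k) q
      = (∏ i ∈ Finset.range k, (1 - w * q ^ i)) * ∏' i : ℕ, (1 - w * q ^ (i + k)) := by
        rw [qPoch, qPochInf]
        congr 1
        exact tprod_congr fun i => by rw [pow_add]; ring
    _ = qPochInf w q := Multipliable.prod_mul_tprod_nat_mul' (f := fun i => 1 - w * q ^ i) hm

lemma summable_quad (x : ℝ) (hx0 : 0 < x) (hx1 : x < 1) (a : ℤ) (r : ℝ) (hr : 0 ≤ r) :
    Summable (fun k : ℕ => x ^ ((k : ℤ) * k + a * k) * r ^ k) := by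
  refine summable_of_ratio_norm_eventually_le (r := 1/2) (by norm_num) ?_
  have hx0' : x ≠ 0 := hx0.ne'
  have hlim : Tendsto (fun k : ℕ => x ^ (2 * (k : ℤ) + 1 + a) * r) atTop (𝓝 0) := by
    have h2 : ∀ k : ℕ, x ^ (2 * (k : ℤ) + 1 + a) * r = (x ^ ((1 : ℤ) + a) * r) * (x ^ 2) ^ k := by
      intro k
      have hconv : (x ^ 2) ^ k = x ^ (2 * (k : ℤ)) := by
        rw [← pow_mul, ← zpow_natCast x (2 * k)]; push_cast; ring_nf
      rw [hconv, show 2 * (k : ℤ) + 1 + a = (1 + a) + 2 * k by ring, zpow_add₀ hx0']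
      ring
    have h3 : Tendsto (fun k : ℕ => (x ^ ((1 : ℤ) + a) * r) * (x ^ 2) ^ k) atTop (𝓝 0) := by
      have : Tendsto (fun k : ℕ => (x ^ 2) ^ k) atTop (𝓝 0) :=
        tendsto_pow_atTop_nhds_zero_of_lt_one (by positivity) (by nlinarith)
      simpa using this.const_mul (x ^ ((1 : ℤ) + a) * r)
    exact h3.congr fun k => (h2 k).symm
  filter_upwards [hlim.eventually_le_const (show (0:ℝ) < 1/2 by norm_num)] with k hk
  have hfk : (0:ℝ) ≤ x ^ ((k : ℤ) * k + a * k) * r ^ k := by positivity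
  rw [Real.norm_of_nonneg (by positivity), Real.norm_of_nonneg hfk]
  push_cast
  rw [show ((k:ℤ)+1) * ((k:ℤ)+1) + a * ((k:ℤ)+1) = (2*(k:ℤ)+1+a) + ((k:ℤ)*k + a*k) by ring,
    zpow_add₀ hx0']
  calc x ^ (2*(k:ℤ)+1+a) * x ^ ((k:ℤ)*k + a*k) * r ^ (k+1)
      = (x ^ (2*(k:ℤ)+1+a) * r) * (x ^ ((k:ℤ)*k + a*k) * r ^ k) := by ring
    _ ≤ 1/2 * (x ^ ((k:ℤ)*k + a*k) * r ^ k) := mul_le_mul_of_nonneg_right hk (by positivity)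

section Euler

open Filter Topology

variable {q : ℂ} {C : ℝ}

lemma qPoch_succ (w : ℂ) (n : ℕ) : qPoch w q (n + 1) = qPoch w q n * (1 - w * q ^ n) := by
  rw [qPoch, qPoch, Finset.prod_range_succ]

lemma qPoch_zero (w : ℂ) : qPoch w q 0 = 1 := by simp [qPoch]

lemma norm_div_qPoch_le (hC0 : 0 < C) (hCle : ∀ n, C ≤ ‖qPoch q q n‖) (w : ℂ) (n : ℕ) :
    ‖w / qPoch q q n‖ ≤ C⁻¹ * ‖w‖ := by
  rw [norm_div, div_le_iff₀ (lt_of_lt_of_le hC0 (hCle n))]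
  have h1 : C⁻¹ * ‖w‖ * C ≤ C⁻¹ * ‖w‖ * ‖qPoch q q n‖ :=
    mul_le_mul_of_nonneg_left (hCle n) (by positivity)
  have h2 : C⁻¹ * ‖w‖ * C = ‖w‖ := by field_simp
  linarith

lemma summable_geomP_norm (hC0 : 0 < C) (hCle : ∀ n, C ≤ ‖qPoch q q n‖)
    {z : ℂ} (hz : ‖z‖ < 1) : Summable (fun n : ℕ => ‖z ^ n / qPoch q q n‖) := by
  refine Summable.of_nonneg_of_le (fun n => norm_nonneg _) (fun n => ?_)
    (((summable_geometric_of_lt_one (norm_nonneg z) hz)).mul_left C⁻¹)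
  calc ‖z ^ n / qPoch q q n‖ ≤ C⁻¹ * ‖z ^ n‖ := norm_div_qPoch_le hC0 hCle _ n
    _ = C⁻¹ * ‖z‖ ^ n := by rw [norm_pow]

lemma summable_geomP (hC0 : 0 < C) (hCle : ∀ n, C ≤ ‖qPoch q q n‖)
    {z : ℂ} (hz : ‖z‖ < 1) : Summable (fun n : ℕ => z ^ n / qPoch q q n) :=
  Summable.of_norm (summable_geomP_norm hC0 hCle hz)

/-- Functional equation for the q-exponential `G`. -/
lemma G_funeq (hq1 : ‖q‖ < 1) (hC0 : 0 < C) (hCle : ∀ n, C ≤ ‖qPoch q q n‖)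
    {z : ℂ} (hz : ‖z‖ < 1) :
    (1 - z) * ∑' n : ℕ, z ^ n / qPoch q q n
      = ∑' n : ℕ, (q * z) ^ n / qPoch q q n := by
  have hqz : ‖q * z‖ < 1 := by
    rw [norm_mul]
    calc ‖q‖ * ‖z‖ ≤ 1 * ‖z‖ :=
          mul_le_mul_of_nonneg_right hq1.le (norm_nonneg z)
      _ = ‖z‖ := one_mul _
      _ < 1 := hz
  have hA := summable_geomP hC0 hCle hz
  have hB := summable_geomP hC0 hCle hqz
  have key : ∀ k : ℕ, z ^ (k+1) / qPoch q q (k+1) - (q*z) ^ (k+1) / qPoch q q (k+1)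
      = z * (z ^ k / qPoch q q k) := by
    intro k
    have hP := qPoch_ne_zero hq1 k
    have hf : (1 : ℂ) - q * q ^ k ≠ 0 := factor_ne_zero (qq_norm_lt hq1 k)
    rw [qPoch_succ]
    field_simp
    ring
  have hdiff : (∑' n : ℕ, z ^ n / qPoch q q n) - (∑' n : ℕ, (q*z) ^ n / qPoch q q n)
      = z * ∑' n : ℕ, z ^ n / qPoch q q n := by
    rw [← Summable.tsum_sub hA hB]
    rw [Summable.tsum_eq_zero_add (hA.sub hB)]
    simp only [pow_zero, qPoch_zero, sub_self, zero_add]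
    calc ∑' k : ℕ, (z ^ (k+1) / qPoch q q (k+1) - (q*z) ^ (k+1) / qPoch q q (k+1))
        = ∑' k : ℕ, z * (z ^ k / qPoch q q k) := tsum_congr key
      _ = z * ∑' n : ℕ, z ^ n / qPoch q q n := tsum_mul_left
  linear_combination hdiff

lemma G_iter (hq1 : ‖q‖ < 1) (hC0 : 0 < C) (hCle : ∀ n, C ≤ ‖qPoch q q n‖)
    {z : ℂ} (hz : ‖z‖ < 1) (n : ℕ) :
    ∑' k : ℕ, (q ^ n * z) ^ k / qPoch q q k
      = qPoch z q n * ∑' k : ℕ, z ^ k / qPoch q q k := by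
  induction n with
  | zero => simp [qPoch_zero]
  | succ n ih =>
    have hqnz : ‖q ^ n * z‖ < 1 := by
      rw [norm_mul, norm_pow]
      calc ‖q‖ ^ n * ‖z‖ ≤ 1 * ‖z‖ := by
            refine mul_le_mul_of_nonneg_right (pow_le_one₀ (norm_nonneg q) hq1.le) (norm_nonneg z)
        _ = ‖z‖ := one_mul _
        _ < 1 := hz
    have h1 := G_funeq hq1 hC0 hCle hqnz
    have h2 : q ^ (n+1) * z = q * (q ^ n * z) := by ring
    calc ∑' k : ℕ, (q ^ (n+1) * z) ^ k / qPoch q q k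
        = ∑' k : ℕ, (q * (q ^ n * z)) ^ k / qPoch q q k := by rw [h2]
      _ = (1 - q ^ n * z) * ∑' k : ℕ, (q ^ n * z) ^ k / qPoch q q k := h1.symm
      _ = (1 - q ^ n * z) * (qPoch z q n * ∑' k : ℕ, z ^ k / qPoch q q k) := by rw [ih]
      _ = qPoch z q (n+1) * ∑' k : ℕ, z ^ k / qPoch q q k := by
          rw [qPoch_succ]; ring

set_option maxHeartbeats 1000000 in
lemma G_near_one (hC0 : 0 < C) (hCle : ∀ n, C ≤ ‖qPoch q q n‖)
    {z w : ℂ} (hz : ‖z‖ < 1) (hwz : ‖w‖ ≤ ‖z‖) :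
    ‖(∑' k : ℕ, w ^ k / qPoch q q k) - 1‖ ≤ (C⁻¹ * (1 - ‖z‖)⁻¹) * ‖w‖ := by
  have hw1 : ‖w‖ < 1 := lt_of_le_of_lt hwz hz
  have hA := summable_geomP hC0 hCle hw1
  have h0 : (∑' k : ℕ, w ^ k / qPoch q q k) - 1 = ∑' k : ℕ, w ^ (k+1) / qPoch q q (k+1) := by
    rw [Summable.tsum_eq_zero_add hA]
    simp [qPoch_zero]
  rw [h0]
  have hs : Summable (fun k : ℕ => w ^ (k+1) / qPoch q q (k+1)) :=
    (summable_nat_add_iff 1).2 hA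
  have hgeom : Summable (fun k : ℕ => (C⁻¹ * ‖w‖) * ‖z‖ ^ k) :=
    ((summable_geometric_of_lt_one (norm_nonneg z) hz)).mul_left _
  calc ‖∑' k : ℕ, w ^ (k+1) / qPoch q q (k+1)‖
      ≤ ∑' k : ℕ, ‖w ^ (k+1) / qPoch q q (k+1)‖ := norm_tsum_le_tsum_norm hs.norm
    _ ≤ ∑' k : ℕ, (C⁻¹ * ‖w‖) * ‖z‖ ^ k := by
        refine Summable.tsum_le_tsum (fun k => ?_) hs.norm hgeom
        calc ‖w ^ (k+1) / qPoch q q (k+1)‖ ≤ C⁻¹ * ‖w ^ (k+1)‖ :=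
              norm_div_qPoch_le hC0 hCle _ _
          _ = C⁻¹ * (‖w‖ * ‖w‖ ^ k) := by rw [norm_pow, pow_succ]; ring_nf
          _ ≤ C⁻¹ * (‖w‖ * ‖z‖ ^ k) := by
              refine mul_le_mul_of_nonneg_left ?_ (by positivity)
              exact mul_le_mul_of_nonneg_left (pow_le_pow_left₀ (norm_nonneg w) hwz k)
                (norm_nonneg w)
          _ = (C⁻¹ * ‖w‖) * ‖z‖ ^ k := by ring
    _ = (C⁻¹ * ‖w‖) * (1 - ‖z‖)⁻¹ := by
        rw [tsum_mul_left, tsum_geometric_of_lt_one (norm_nonneg z) hz]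
    _ = (C⁻¹ * (1 - ‖z‖)⁻¹) * ‖w‖ := by ring

/-- Euler's identity: `(Σ zⁿ/(q;q)ₙ) (z;q)_∞ = 1` for `‖z‖ < 1`. -/
lemma euler_B (hq1 : ‖q‖ < 1) (hC0 : 0 < C) (hCle : ∀ n, C ≤ ‖qPoch q q n‖)
    {z : ℂ} (hz : ‖z‖ < 1) :
    (∑' n : ℕ, z ^ n / qPoch q q n) * qPochInf z q = 1 := by
  have hlim1 : Tendsto (fun n : ℕ => ∑' k : ℕ, (q ^ n * z) ^ k / qPoch q q k)
      atTop (𝓝 1) := by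
    rw [tendsto_iff_norm_sub_tendsto_zero]
    have hb : ∀ n : ℕ, ‖(∑' k : ℕ, (q ^ n * z) ^ k / qPoch q q k) - 1‖
        ≤ ((C⁻¹ * (1 - ‖z‖)⁻¹) * ‖z‖) * ‖q‖ ^ n := by
      intro n
      have hwz : ‖q ^ n * z‖ ≤ ‖z‖ := by
        rw [norm_mul, norm_pow]
        calc ‖q‖ ^ n * ‖z‖ ≤ 1 * ‖z‖ :=
              mul_le_mul_of_nonneg_right (pow_le_one₀ (norm_nonneg q) hq1.le) (norm_nonneg z)
          _ = ‖z‖ := one_mul _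
      calc ‖(∑' k : ℕ, (q ^ n * z) ^ k / qPoch q q k) - 1‖
          ≤ (C⁻¹ * (1 - ‖z‖)⁻¹) * ‖q ^ n * z‖ := G_near_one hC0 hCle hz hwz
        _ = ((C⁻¹ * (1 - ‖z‖)⁻¹) * ‖z‖) * ‖q‖ ^ n := by
            rw [norm_mul, norm_pow]; ring
    have hgeo : Tendsto (fun n : ℕ => ((C⁻¹ * (1 - ‖z‖)⁻¹) * ‖z‖) * ‖q‖ ^ n) atTop (𝓝 0) := by
      simpa using (tendsto_pow_atTop_nhds_zero_of_lt_one (norm_nonneg q) hq1).const_mul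
        ((C⁻¹ * (1 - ‖z‖)⁻¹) * ‖z‖)
    exact squeeze_zero (fun n => norm_nonneg _) hb hgeo
  have hlim2 : Tendsto (fun n : ℕ => qPoch z q n * ∑' k : ℕ, z ^ k / qPoch q q k)
      atTop (𝓝 (qPochInf z q * ∑' k : ℕ, z ^ k / qPoch q q k)) :=
    (tendsto_qPoch hq1 z).mul_const _
  have heq : (fun n : ℕ => ∑' k : ℕ, (q ^ n * z) ^ k / qPoch q q k)
      = fun n : ℕ => qPoch z q n * ∑' k : ℕ, z ^ k / qPoch q q k :=
    funext fun n => G_iter hq1 hC0 hCle hz n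
  rw [heq] at hlim1
  have := tendsto_nhds_unique hlim2 hlim1
  rw [mul_comm]
  exact this

lemma choose_succ_two (k : ℕ) : (k + 1).choose 2 = k.choose 2 + k := by
  rw [Nat.choose_succ_succ, Nat.choose_one_right]; ring

lemma summable_choose_aux (x : ℝ) (hx0 : 0 < x) (hx1 : x < 1) (r : ℝ) (hr : 0 ≤ r) :
    Summable (fun k : ℕ => x ^ (k.choose 2) * r ^ k) := by
  refine summable_of_ratio_norm_eventually_le (r := 1/2) (by norm_num) ?_
  have hlim : Tendsto (fun k : ℕ => x ^ k * r) atTop (𝓝 0) := by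
    simpa using (tendsto_pow_atTop_nhds_zero_of_lt_one hx0.le hx1).mul_const r
  filter_upwards [hlim.eventually_le_const (show (0:ℝ) < 1/2 by norm_num)] with k hk
  rw [Real.norm_of_nonneg (by positivity), Real.norm_of_nonneg (by positivity)]
  calc x ^ ((k+1).choose 2) * r ^ (k+1)
      = (x ^ k * r) * (x ^ (k.choose 2) * r ^ k) := by
        rw [choose_succ_two, pow_add, pow_succ]; ring
    _ ≤ 1/2 * (x ^ (k.choose 2) * r ^ k) := mul_le_mul_of_nonneg_right hk (by positivity)

lemma summable_A_norm (hC0 : 0 < C) (hCle : ∀ n, C ≤ ‖qPoch q q n‖)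
    (hq0 : 0 < ‖q‖) (hq1 : ‖q‖ < 1) (z : ℂ) :
    Summable (fun k : ℕ => ‖(-1 : ℂ) ^ k * q ^ (k.choose 2) * z ^ k / qPoch q q k‖) := by
  refine Summable.of_nonneg_of_le (fun k => norm_nonneg _) (fun k => ?_)
    ((summable_choose_aux ‖q‖ hq0 hq1 ‖z‖ (norm_nonneg z)).mul_left C⁻¹)
  calc ‖(-1 : ℂ) ^ k * q ^ (k.choose 2) * z ^ k / qPoch q q k‖
      ≤ C⁻¹ * ‖(-1 : ℂ) ^ k * q ^ (k.choose 2) * z ^ k‖ := norm_div_qPoch_le hC0 hCle _ _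
    _ = C⁻¹ * (‖q‖ ^ (k.choose 2) * ‖z‖ ^ k) := by
        rw [norm_mul, norm_mul, norm_pow, norm_pow, norm_pow, norm_neg, norm_one,
          one_pow, one_mul]

lemma summable_A (hC0 : 0 < C) (hCle : ∀ n, C ≤ ‖qPoch q q n‖)
    (hq0 : 0 < ‖q‖) (hq1 : ‖q‖ < 1) (z : ℂ) :
    Summable (fun k : ℕ => (-1 : ℂ) ^ k * q ^ (k.choose 2) * z ^ k / qPoch q q k) :=
  Summable.of_norm (summable_A_norm hC0 hCle hq0 hq1 z)

lemma A_funeq (hC0 : 0 < C) (hCle : ∀ n, C ≤ ‖qPoch q q n‖)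
    (hq0 : 0 < ‖q‖) (hq1 : ‖q‖ < 1) (z : ℂ) :
    ∑' k : ℕ, (-1 : ℂ) ^ k * q ^ (k.choose 2) * z ^ k / qPoch q q k
      = (1 - z) * ∑' k : ℕ, (-1 : ℂ) ^ k * q ^ (k.choose 2) * (q * z) ^ k / qPoch q q k := by
  have hA := summable_A hC0 hCle hq0 hq1 z
  have hB := summable_A hC0 hCle hq0 hq1 (q * z)
  have key : ∀ k : ℕ,
      (-1 : ℂ) ^ (k+1) * q ^ ((k+1).choose 2) * z ^ (k+1) / qPoch q q (k+1)
        - (-1 : ℂ) ^ (k+1) * q ^ ((k+1).choose 2) * (q * z) ^ (k+1) / qPoch q q (k+1)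
      = (-z) * ((-1 : ℂ) ^ k * q ^ (k.choose 2) * (q * z) ^ k / qPoch q q k) := by
    intro k
    have hP := qPoch_ne_zero hq1 k
    have hf : (1 : ℂ) - q * q ^ k ≠ 0 := factor_ne_zero (qq_norm_lt hq1 k)
    rw [qPoch_succ, choose_succ_two, pow_add, pow_succ, pow_succ, mul_pow, mul_pow]
    field_simp
    ring
  have hdiff : (∑' k : ℕ, (-1 : ℂ) ^ k * q ^ (k.choose 2) * z ^ k / qPoch q q k)
      - (∑' k : ℕ, (-1 : ℂ) ^ k * q ^ (k.choose 2) * (q * z) ^ k / qPoch q q k)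
      = (-z) * ∑' k : ℕ, (-1 : ℂ) ^ k * q ^ (k.choose 2) * (q * z) ^ k / qPoch q q k := by
    rw [← Summable.tsum_sub hA hB]
    rw [Summable.tsum_eq_zero_add (hA.sub hB)]
    simp only [pow_zero, qPoch_zero, one_mul, mul_one, sub_self, zero_add]
    calc ∑' k : ℕ, ((-1 : ℂ) ^ (k+1) * q ^ ((k+1).choose 2) * z ^ (k+1) / qPoch q q (k+1)
          - (-1 : ℂ) ^ (k+1) * q ^ ((k+1).choose 2) * (q * z) ^ (k+1) / qPoch q q (k+1))
        = ∑' k : ℕ, (-z) * ((-1 : ℂ) ^ k * q ^ (k.choose 2) * (q * z) ^ k / qPoch q q k) :=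
          tsum_congr key
      _ = (-z) * ∑' k : ℕ, (-1 : ℂ) ^ k * q ^ (k.choose 2) * (q * z) ^ k / qPoch q q k :=
          tsum_mul_left
  linear_combination hdiff

lemma A_iter (hC0 : 0 < C) (hCle : ∀ n, C ≤ ‖qPoch q q n‖)
    (hq0 : 0 < ‖q‖) (hq1 : ‖q‖ < 1) (z : ℂ) (n : ℕ) :
    ∑' k : ℕ, (-1 : ℂ) ^ k * q ^ (k.choose 2) * z ^ k / qPoch q q k
      = qPoch z q n * ∑' k : ℕ, (-1 : ℂ) ^ k * q ^ (k.choose 2) * (q ^ n * z) ^ k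
          / qPoch q q k := by
  induction n with
  | zero => simp [qPoch_zero]
  | succ n ih =>
    have h1 := A_funeq hC0 hCle hq0 hq1 (q ^ n * z)
    have h2 : q * (q ^ n * z) = q ^ (n+1) * z := by ring
    rw [ih, h1, h2, qPoch_succ]
    ring

set_option maxHeartbeats 1000000 in
lemma A_near_one (hC0 : 0 < C) (hCle : ∀ n, C ≤ ‖qPoch q q n‖)
    (hq0 : 0 < ‖q‖) (hq1 : ‖q‖ < 1) {w B : ℂ} (hwB : ‖w‖ ≤ ‖B‖) :
    ‖(∑' k : ℕ, (-1 : ℂ) ^ k * q ^ (k.choose 2) * w ^ k / qPoch q q k) - 1‖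
      ≤ (C⁻¹ * ∑' k : ℕ, ‖q‖ ^ (k.choose 2) * ‖B‖ ^ k) * ‖w‖ := by
  have hA := summable_A hC0 hCle hq0 hq1 w
  have h0 : (∑' k : ℕ, (-1 : ℂ) ^ k * q ^ (k.choose 2) * w ^ k / qPoch q q k) - 1
      = ∑' k : ℕ, (-1 : ℂ) ^ (k+1) * q ^ ((k+1).choose 2) * w ^ (k+1) / qPoch q q (k+1) := by
    rw [Summable.tsum_eq_zero_add hA]
    simp [qPoch_zero]
  rw [h0]
  have hs : Summable (fun k : ℕ =>
      (-1 : ℂ) ^ (k+1) * q ^ ((k+1).choose 2) * w ^ (k+1) / qPoch q q (k+1)) :=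
    (summable_nat_add_iff 1).2 hA
  have hgeom : Summable (fun k : ℕ => ‖w‖ * (C⁻¹ * (‖q‖ ^ (k.choose 2) * ‖B‖ ^ k))) :=
    ((summable_choose_aux ‖q‖ hq0 hq1 ‖B‖ (norm_nonneg B)).mul_left C⁻¹).mul_left ‖w‖
  calc ‖∑' k : ℕ, (-1 : ℂ) ^ (k+1) * q ^ ((k+1).choose 2) * w ^ (k+1) / qPoch q q (k+1)‖
      ≤ ∑' k : ℕ, ‖(-1 : ℂ) ^ (k+1) * q ^ ((k+1).choose 2) * w ^ (k+1) / qPoch q q (k+1)‖ :=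
        norm_tsum_le_tsum_norm hs.norm
    _ ≤ ∑' k : ℕ, ‖w‖ * (C⁻¹ * (‖q‖ ^ (k.choose 2) * ‖B‖ ^ k)) := by
        refine Summable.tsum_le_tsum (fun k => ?_) hs.norm hgeom
        calc ‖(-1 : ℂ) ^ (k+1) * q ^ ((k+1).choose 2) * w ^ (k+1) / qPoch q q (k+1)‖
            ≤ C⁻¹ * ‖(-1 : ℂ) ^ (k+1) * q ^ ((k+1).choose 2) * w ^ (k+1)‖ :=
              norm_div_qPoch_le hC0 hCle _ _
          _ = C⁻¹ * (‖q‖ ^ ((k+1).choose 2) * (‖w‖ * ‖w‖ ^ k)) := by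
              rw [norm_mul, norm_mul, norm_pow, norm_pow, norm_pow, norm_neg, norm_one,
                one_pow, one_mul, pow_succ]
              ring
          _ ≤ C⁻¹ * (‖q‖ ^ (k.choose 2) * (‖w‖ * ‖B‖ ^ k)) := by
              refine mul_le_mul_of_nonneg_left ?_ (by positivity)
              refine mul_le_mul ?_ ?_ (by positivity) (by positivity)
              · exact pow_le_pow_of_le_one (norm_nonneg q) hq1.le
                  (by rw [choose_succ_two]; omega)
              · exact mul_le_mul_of_nonneg_left (pow_le_pow_left₀ (norm_nonneg w) hwB k)
                  (norm_nonneg w)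
          _ = ‖w‖ * (C⁻¹ * (‖q‖ ^ (k.choose 2) * ‖B‖ ^ k)) := by ring
    _ = ‖w‖ * ∑' k : ℕ, C⁻¹ * (‖q‖ ^ (k.choose 2) * ‖B‖ ^ k) := tsum_mul_left
    _ = (C⁻¹ * ∑' k : ℕ, ‖q‖ ^ (k.choose 2) * ‖B‖ ^ k) * ‖w‖ := by
        rw [tsum_mul_left]; ring

/-- Euler's identity: `Σ (-1)^k q^(k choose 2) z^k/(q;q)_k = (z;q)_∞`. -/
lemma euler_A (hC0 : 0 < C) (hCle : ∀ n, C ≤ ‖qPoch q q n‖)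
    (hq0 : 0 < ‖q‖) (hq1 : ‖q‖ < 1) (z : ℂ) :
    ∑' k : ℕ, (-1 : ℂ) ^ k * q ^ (k.choose 2) * z ^ k / qPoch q q k = qPochInf z q := by
  set M : ℝ := C⁻¹ * ∑' k : ℕ, ‖q‖ ^ (k.choose 2) * ‖z‖ ^ k with hM
  have hlim1 : Tendsto (fun n : ℕ =>
      ∑' k : ℕ, (-1 : ℂ) ^ k * q ^ (k.choose 2) * (q ^ n * z) ^ k / qPoch q q k)
      atTop (𝓝 1) := by
    rw [tendsto_iff_norm_sub_tendsto_zero]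
    have hb : ∀ n : ℕ,
        ‖(∑' k : ℕ, (-1 : ℂ) ^ k * q ^ (k.choose 2) * (q ^ n * z) ^ k / qPoch q q k) - 1‖
        ≤ (M * ‖z‖) * ‖q‖ ^ n := by
      intro n
      have hwz : ‖q ^ n * z‖ ≤ ‖z‖ := by
        rw [norm_mul, norm_pow]
        calc ‖q‖ ^ n * ‖z‖ ≤ 1 * ‖z‖ :=
              mul_le_mul_of_nonneg_right (pow_le_one₀ (norm_nonneg q) hq1.le) (norm_nonneg z)
          _ = ‖z‖ := one_mul _
      calc ‖(∑' k : ℕ, (-1 : ℂ) ^ k * q ^ (k.choose 2) * (q ^ n * z) ^ k / qPoch q q k) - 1‖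
          ≤ M * ‖q ^ n * z‖ := A_near_one hC0 hCle hq0 hq1 hwz
        _ = (M * ‖z‖) * ‖q‖ ^ n := by rw [norm_mul, norm_pow]; ring
    have hgeo : Tendsto (fun n : ℕ => (M * ‖z‖) * ‖q‖ ^ n) atTop (𝓝 0) := by
      simpa using (tendsto_pow_atTop_nhds_zero_of_lt_one (norm_nonneg q) hq1).const_mul (M * ‖z‖)
    exact squeeze_zero (fun n => norm_nonneg _) hb hgeo
  have hlim2 : Tendsto (fun n : ℕ => qPoch z q n) atTop (𝓝 (qPochInf z q)) :=
    tendsto_qPoch hq1 z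
  have hlim3 : Tendsto (fun n : ℕ => qPoch z q n *
      ∑' k : ℕ, (-1 : ℂ) ^ k * q ^ (k.choose 2) * (q ^ n * z) ^ k / qPoch q q k)
      atTop (𝓝 (qPochInf z q * 1)) := hlim2.mul hlim1
  have heq : (fun _ : ℕ => ∑' k : ℕ, (-1 : ℂ) ^ k * q ^ (k.choose 2) * z ^ k / qPoch q q k)
      = fun n : ℕ => qPoch z q n *
          ∑' k : ℕ, (-1 : ℂ) ^ k * q ^ (k.choose 2) * (q ^ n * z) ^ k / qPoch q q k :=
    funext fun n => A_iter hC0 hCle hq0 hq1 z n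
  have hconst : Tendsto (fun _ : ℕ =>
      ∑' k : ℕ, (-1 : ℂ) ^ k * q ^ (k.choose 2) * z ^ k / qPoch q q k) atTop
      (𝓝 (∑' k : ℕ, (-1 : ℂ) ^ k * q ^ (k.choose 2) * z ^ k / qPoch q q k)) :=
    tendsto_const_nhds
  rw [heq] at hconst
  have := tendsto_nhds_unique hconst hlim3
  rw [this, mul_one]
end Euler

lemma tprod_eq_zero_of_factor {f : ℕ → ℂ} (i0 : ℕ) (h : f i0 = 0) : ∏' i, f i = 0 := by
  have hp : HasProd f 0 := by
    rw [HasProd]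
    refine Filter.Tendsto.congr' ?_ tendsto_const_nhds
    filter_upwards [Filter.eventually_ge_atTop ({i0} : Finset ℕ)] with s hs
    exact (Finset.prod_eq_zero (hs (Finset.mem_singleton_self i0)) h).symm
  exact hp.tprod_eq

lemma choose2_cast (k : ℕ) : (2 * k.choose 2 : ℤ) = (k : ℤ) * ((k : ℤ) - 1) := by
  induction k with
  | zero => simp
  | succ k ih =>
    rw [choose_succ_two]
    push_cast
    push_cast at ih
    linear_combination ih


/-- for `e ≥ 0`,
`Σ_{n≥0} (q^{e/2+1})^n/(q;q)_n · I_Δ(m-n,e) = q^{-me/2} (q^{1-m};q)_∞/(q;q)_∞`,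
with absolute convergence; in particular the sum vanishes for `m > 0`. Here `u = q^{1/2}`. -/
theorem stmt_13 (u : ℂ) (hu0 : 0 < ‖u‖) (hu1 : ‖u‖ < 1) (q : ℂ) (hq : q = u ^ 2)
    (m e : ℤ) (he : 0 ≤ e) :
    Summable (fun n : ℕ =>
      ‖(u ^ (e + 2)) ^ n / qPoch q q n * tetIndex u (m - n) e‖) ∧
    ∑' n : ℕ, (u ^ (e + 2)) ^ n / qPoch q q n * tetIndex u (m - n) e =
      u ^ (-(m * e)) * qPochInf (q ^ (1 - m)) q / qPochInf q q ∧
    (0 < m → ∑' n : ℕ, (u ^ (e + 2)) ^ n / qPoch q q n * tetIndex u (m - n) e = 0) := by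
  have hu : u ≠ 0 := fun h => by rw [h] at hu0; simp at hu0
  lift e to ℕ using he with E hE
  subst hq
  have hq0 : 0 < ‖u ^ 2‖ := by rw [norm_pow]; positivity
  have hq1 : ‖u ^ 2‖ < 1 := by rw [norm_pow]; nlinarith
  obtain ⟨C, hC0, hCle1, hCle⟩ := exists_lb hq1
  have hx0 : (0:ℝ) < ‖u‖ := hu0
  have hxne : ‖u‖ ≠ 0 := hx0.ne'
  -- rewrite of tetTerm for nonnegative e
  have htet : ∀ (m' : ℤ) (k : ℕ), tetTerm u m' (E : ℤ) k =
      (-1 : ℂ) ^ k * u ^ ((k : ℤ) * ((k : ℤ) + 1) - (2 * (k : ℤ) + (E : ℤ)) * m') /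
        (qPoch (u ^ 2) (u ^ 2) k * qPoch (u ^ 2) (u ^ 2) (k + E)) := by
    intro m' k
    rw [tetTerm, if_pos (by omega : (-(E:ℤ)).toNat ≤ k),
      (by omega : ((k : ℤ) + (E : ℤ)).toNat = k + E)]
  -- the exponent of the double-sum terms
  set g : ℕ → ℕ → ℤ := fun n k =>
    (k : ℤ) * ((k : ℤ) + 1) - (2 * (k : ℤ) + (E : ℤ)) * m + 2 * (n : ℤ) * ((k : ℤ) + E + 1)
    with hg
  set hh : ℕ → ℤ := fun k => (k : ℤ) * ((k : ℤ) + 1) - (2 * (k : ℤ) + (E : ℤ)) * m with hhh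
  -- normal form of the summands
  set Fp : ℕ × ℕ → ℂ := fun p => (-1 : ℂ) ^ p.2 * u ^ (g p.1 p.2) /
    (qPoch (u ^ 2) (u ^ 2) p.1 *
      (qPoch (u ^ 2) (u ^ 2) p.2 * qPoch (u ^ 2) (u ^ 2) (p.2 + E))) with hFp
  have hank : ∀ n k : ℕ,
      (u ^ ((E : ℤ) + 2)) ^ n / qPoch (u ^ 2) (u ^ 2) n * tetTerm u (m - n) (E : ℤ) k
        = Fp (n, k) := by
    intro n k
    rw [htet, hFp, div_mul_div_comm]
    congr 1
    have h1 : (u ^ ((E : ℤ) + 2)) ^ n = u ^ (((E : ℤ) + 2) * n) := by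
      rw [← zpow_natCast (u ^ ((E : ℤ) + 2)) n, ← zpow_mul]
    rw [h1]
    calc u ^ (((E : ℤ) + 2) * n) *
          ((-1 : ℂ) ^ k * u ^ ((k : ℤ) * ((k : ℤ) + 1) - (2 * (k : ℤ) + (E : ℤ)) * (m - n)))
        = (-1 : ℂ) ^ k * (u ^ (((E : ℤ) + 2) * n) *
            u ^ ((k : ℤ) * ((k : ℤ) + 1) - (2 * (k : ℤ) + (E : ℤ)) * (m - n))) := by ring
      _ = (-1 : ℂ) ^ k * u ^ (g n k) := by
          rw [← zpow_add₀ hu]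
          congr 1
          rw [hg]
          ring
  -- norm bounds
  set φ : ℕ → ℝ := fun k => (C * (C * C))⁻¹ * ‖u‖ ^ (hh k) with hφ
  set ψ : ℕ → ℝ := fun n => ‖u‖ ^ ((2 * (E : ℤ) + 2) * n) with hψ
  have hφ0 : ∀ k, 0 ≤ φ k := fun k => by rw [hφ]; positivity
  have hψ0 : ∀ n, 0 ≤ ψ n := fun n => by rw [hψ]; positivity
  have hnorm : ∀ n k : ℕ, ‖Fp (n, k)‖ ≤ ψ n * φ k := by
    intro n k
    have hDn := hCle n
    have hDk := hCle k
    have hDke := hCle (k + E)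
    have hPn := lt_of_lt_of_le hC0 hDn
    have hPk := lt_of_lt_of_le hC0 hDk
    have hPke := lt_of_lt_of_le hC0 hDke
    have hnormFp : ‖Fp (n, k)‖ = ‖u‖ ^ (g n k) /
        (‖qPoch (u ^ 2) (u ^ 2) n‖ * (‖qPoch (u ^ 2) (u ^ 2) k‖ *
          ‖qPoch (u ^ 2) (u ^ 2) (k + E)‖)) := by
      rw [hFp]
      rw [norm_div, norm_mul, norm_pow, norm_neg, norm_one, one_pow, one_mul, norm_zpow,
        norm_mul, norm_mul]
    rw [hnormFp]
    have hstep1 : ‖u‖ ^ (g n k) /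
        (‖qPoch (u ^ 2) (u ^ 2) n‖ * (‖qPoch (u ^ 2) (u ^ 2) k‖ *
          ‖qPoch (u ^ 2) (u ^ 2) (k + E)‖)) ≤ ‖u‖ ^ (g n k) / (C * (C * C)) := by
      gcongr
    refine hstep1.trans ?_
    rw [div_eq_inv_mul]
    have hexp : hh k + (2 * (E : ℤ) + 2) * n ≤ g n k := by
      simp only [hg, hhh]
      have h2nk : (0:ℤ) ≤ 2 * (n:ℤ) * k := by positivity
      linarith
    have hle : ‖u‖ ^ (g n k) ≤ ‖u‖ ^ (hh k + (2 * (E : ℤ) + 2) * n) :=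
      zpow_le_zpow_right_of_le_one₀ hx0 hu1.le hexp
    calc (C * (C * C))⁻¹ * ‖u‖ ^ (g n k)
        ≤ (C * (C * C))⁻¹ * ‖u‖ ^ (hh k + (2 * (E : ℤ) + 2) * n) := by
          refine mul_le_mul_of_nonneg_left hle (by positivity)
      _ = ψ n * φ k := by
          rw [zpow_add₀ hxne, hψ, hφ]
          ring
  have hφsum : Summable φ := by
    refine ((summable_quad ‖u‖ hx0 hu1 (1 - 2 * m) 1 zero_le_one).mul_left
      ((C * (C * C))⁻¹ * ‖u‖ ^ (-((E : ℤ) * m)))).congr fun k => ?_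
    rw [hφ, one_pow, mul_one, mul_assoc, ← zpow_add₀ hxne]
    congr 2
    rw [hhh]
    ring
  have hψsum : Summable ψ := by
    refine (summable_geometric_of_lt_one (r := ‖u‖ ^ (2 * E + 2)) (by positivity)
      (pow_lt_one₀ hx0.le hu1 (by omega))).congr fun n => ?_
    rw [hψ, ← pow_mul, ← zpow_natCast ‖u‖ ((2 * E + 2) * n)]
    norm_cast
  have hFnorm : Summable (fun p : ℕ × ℕ => ‖Fp p‖) := by
    refine Summable.of_nonneg_of_le (fun p => norm_nonneg _) (fun p => hnorm p.1 p.2)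
      (hψsum.mul_of_nonneg hφsum hψ0 hφ0)
  have hFsum : Summable Fp := hFnorm.of_norm
  -- outer terms
  have houter : ∀ n : ℕ,
      (u ^ ((E : ℤ) + 2)) ^ n / qPoch (u ^ 2) (u ^ 2) n * tetIndex u (m - n) (E : ℤ)
        = ∑' k : ℕ, Fp (n, k) := by
    intro n
    rw [tetIndex, ← tsum_mul_left]
    exact tsum_congr fun k => hank n k
  -- first conjunct: summability of norms of outer terms
  have hconj1 : Summable (fun n : ℕ =>
      ‖(u ^ ((E : ℤ) + 2)) ^ n / qPoch (u ^ 2) (u ^ 2) n * tetIndex u (m - n) (E : ℤ)‖) := by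
    refine Summable.of_nonneg_of_le (fun n => norm_nonneg _) (fun n => ?_)
      (hψsum.mul_right (∑' k, φ k))
    rw [houter n]
    calc ‖∑' k : ℕ, Fp (n, k)‖ ≤ ∑' k : ℕ, ‖Fp (n, k)‖ :=
          norm_tsum_le_tsum_norm (hFnorm.prod_factor n)
      _ ≤ ∑' k : ℕ, ψ n * φ k := by
          refine Summable.tsum_le_tsum (fun k => hnorm n k) (hFnorm.prod_factor n)
            (hφsum.mul_left (ψ n))
      _ = ψ n * ∑' k, φ k := tsum_mul_left
  -- Fubini
  have hfub : ∑' n : ℕ, (u ^ ((E : ℤ) + 2)) ^ n / qPoch (u ^ 2) (u ^ 2) n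
        * tetIndex u (m - n) (E : ℤ)
      = ∑' k : ℕ, ∑' n : ℕ, Fp (n, k) := by
    rw [tsum_congr houter]
    exact (Summable.tsum_comm (f := fun n k => Fp (n, k)) hFsum).symm
  have hq2ne : (u ^ 2 : ℂ) ≠ 0 := pow_ne_zero 2 hu
  have hQ1 : (∑' n : ℕ, (u ^ 2) ^ n / qPoch (u ^ 2) (u ^ 2) n) * qPochInf (u ^ 2) (u ^ 2) = 1 :=
    euler_B hq1 hC0 hCle hq1
  have hQne : qPochInf (u ^ 2) (u ^ 2) ≠ 0 := by
    intro h; rw [h, mul_zero] at hQ1; exact one_ne_zero hQ1.symm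
  -- inner sums over n
  have hinner : ∀ k : ℕ, ∑' n : ℕ, Fp (n, k)
      = (u ^ (-(m * (E : ℤ))) / qPochInf (u ^ 2) (u ^ 2)) *
        ((-1 : ℂ) ^ k * (u ^ 2) ^ (k.choose 2) * ((u ^ 2) ^ ((1 : ℤ) - m)) ^ k
          / qPoch (u ^ 2) (u ^ 2) k) := by
    intro k
    have hPk := qPoch_ne_zero hq1 k
    have hPke := qPoch_ne_zero hq1 (k + E)
    have hw1 : ‖(u ^ 2) ^ (k + E + 1)‖ < 1 := by
      rw [norm_pow]
      calc ‖u ^ 2‖ ^ (k + E + 1) ≤ ‖u ^ 2‖ ^ 1 :=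
            pow_le_pow_of_le_one (norm_nonneg _) hq1.le (by omega)
        _ < 1 := by simpa using hq1
    have hstep1 : ∀ n : ℕ, Fp (n, k)
        = ((-1 : ℂ) ^ k * u ^ (hh k) / (qPoch (u ^ 2) (u ^ 2) k * qPoch (u ^ 2) (u ^ 2) (k + E)))
          * (((u ^ 2) ^ (k + E + 1)) ^ n / qPoch (u ^ 2) (u ^ 2) n) := by
      intro n
      simp only [hFp]
      have hwn : (((u ^ 2) ^ (k + E + 1)) : ℂ) ^ n = u ^ ((2 * ((k : ℤ) + E + 1) * n) : ℤ) := by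
        rw [← pow_mul, ← pow_mul, ← zpow_natCast u (2 * ((k + E + 1) * n))]
        congr 1
        push_cast
        ring
      rw [hwn, div_mul_div_comm,
        show ((-1 : ℂ) ^ k * u ^ (hh k)) * u ^ ((2 * ((k : ℤ) + E + 1) * n) : ℤ)
          = (-1 : ℂ) ^ k * u ^ (g n k) from by
            rw [mul_assoc, ← zpow_add₀ hu]
            congr 2
            simp only [hg, hhh]
            ring,
        mul_comm (qPoch (u ^ 2) (u ^ 2) k * qPoch (u ^ 2) (u ^ 2) (k + E))
          (qPoch (u ^ 2) (u ^ 2) n)]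
    rw [tsum_congr hstep1, tsum_mul_left]
    have hB := euler_B hq1 hC0 hCle hw1
    have hsplit : qPoch (u ^ 2) (u ^ 2) (k + E) * qPochInf ((u ^ 2) ^ (k + E + 1)) (u ^ 2)
        = qPochInf (u ^ 2) (u ^ 2) := by
      have h := qPochInf_split hq1 (u ^ 2) (k + E)
      rw [← h]
      congr 2
      rw [pow_succ']
    have hPinfne : qPochInf ((u ^ 2) ^ (k + E + 1)) (u ^ 2) ≠ 0 := by
      intro h; rw [h, mul_zero] at hB; exact one_ne_zero hB.symm
    have hGval : (∑' n : ℕ, ((u ^ 2) ^ (k + E + 1)) ^ n / qPoch (u ^ 2) (u ^ 2) n)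
        = qPoch (u ^ 2) (u ^ 2) (k + E) / qPochInf (u ^ 2) (u ^ 2) := by
      rw [← hsplit]
      rw [eq_div_iff (mul_ne_zero hPke hPinfne)]
      linear_combination qPoch (u ^ 2) (u ^ 2) (k + E) * hB
    rw [hGval]
    have hexp2 : u ^ (hh k)
        = u ^ (-(m * (E : ℤ))) * ((u ^ 2) ^ (k.choose 2) * ((u ^ 2) ^ ((1 : ℤ) - m)) ^ k) := by
      have h1 : ((u : ℂ) ^ 2) ^ (k.choose 2) = u ^ ((2 * k.choose 2 : ℕ) : ℤ) := by
        rw [← pow_mul, zpow_natCast]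
      have h2 : (((u ^ 2) : ℂ) ^ ((1 : ℤ) - m)) ^ k = u ^ ((2 * ((1 : ℤ) - m)) * k) := by
        rw [show ((u : ℂ) ^ 2) = u ^ ((2 : ℕ) : ℤ) from (zpow_natCast u 2).symm,
          ← zpow_mul, ← zpow_natCast (u ^ (((2 : ℕ) : ℤ) * (1 - m))) k, ← zpow_mul]
        norm_num
      rw [h1, h2, ← zpow_add₀ hu, ← zpow_add₀ hu]
      congr 1
      have hcc := choose2_cast k
      simp only [hhh]
      push_cast
      linear_combination -hcc
    rw [hexp2, div_mul_div_comm,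
      show qPoch (u ^ 2) (u ^ 2) k * qPoch (u ^ 2) (u ^ 2) (k + E) * qPochInf (u ^ 2) (u ^ 2)
        = (qPoch (u ^ 2) (u ^ 2) k * qPochInf (u ^ 2) (u ^ 2)) * qPoch (u ^ 2) (u ^ 2) (k + E)
        from by ring,
      mul_div_mul_right _ _ hPke]
    ring
  refine ⟨hconj1, ?_, ?_⟩
  · rw [hfub, tsum_congr hinner, tsum_mul_left,
      euler_A hC0 hCle hq0 hq1 ((u ^ 2) ^ ((1 : ℤ) - m))]
    ring
  · intro hm
    rw [hfub, tsum_congr hinner, tsum_mul_left,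
      euler_A hC0 hCle hq0 hq1 ((u ^ 2) ^ ((1 : ℤ) - m))]
    have hzero : qPochInf ((u ^ 2) ^ ((1 : ℤ) - m)) (u ^ 2) = 0 := by
      refine tprod_eq_zero_of_factor (m - 1).toNat ?_
      have h1 : ((u ^ 2 : ℂ)) ^ ((m - 1).toNat) = (u ^ 2) ^ ((m : ℤ) - 1) := by
        rw [← zpow_natCast (u ^ 2 : ℂ) ((m - 1).toNat), Int.toNat_of_nonneg (by omega)]
      rw [h1, ← zpow_add₀ hq2ne, show ((1 : ℤ) - m) + (m - 1) = 0 by ring, zpow_zero,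
        sub_self]
    rw [hzero, mul_zero]
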